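/- If the SOCP lifting variables at each edge of a cycle satisfy the exact equations c_ij + I·s_ij = conj(V_i)·V_j for some nonzero complex phasors V_i, then the sum of the arguments arg(c_ij + I·s_ij) over the directed edges of the cycle is an integer multiple of 2π. -/

import Mathlib

/-- If the SOCP lifting variables along the edges of a cycle `V 0 → V 1 → ⋯ → V (k-1) → V 0`
satisfy the exact equations `cᵢ + I·sᵢ = conj(Vᵢ)·V_{i+1}` for nonzero phasors `Vᵢ`, then the
sum of the arguments `arg (cᵢ + I·sᵢ)` over the directed edges of the cycle is an integer
multiple of `2π`. -/
theorem stmt_10 (k : ℕ) [NeZero k] (V : Fin k → ℂ) (hV : ∀ i, V i ≠ 0)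
    (c s : Fin k → ℝ)
    (h : ∀ i : Fin k, (c i : ℂ) + (s i : ℂ) * Complex.I = (starRingEnd ℂ (V i)) * V (i + 1)) :
    ∃ m : ℤ, ∑ i : Fin k, Complex.arg ((c i : ℂ) + (s i : ℂ) * Complex.I)
      = m * (2 * Real.pi) := by
  set z : Fin k → ℂ := fun i => (c i : ℂ) + (s i : ℂ) * Complex.I with hz
  have hzne : ∀ i, z i ≠ 0 := by
    intro i
    rw [hz]
    simp only
    rw [h i]
    exact mul_ne_zero (by simpa using hV i) (hV (i + 1))
  have hprod : (∏ i, z i) = ((∏ i, Complex.normSq (V i) : ℝ) : ℂ) := by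
    push_cast
    calc ∏ i, z i = ∏ i, (starRingEnd ℂ (V i)) * V (i + 1) :=
          Finset.prod_congr rfl (fun i _ => h i)
      _ = (∏ i, (starRingEnd ℂ (V i))) * ∏ i, V (i + 1) := Finset.prod_mul_distrib
      _ = (∏ i, (starRingEnd ℂ (V i))) * ∏ i, V i := by
          congr 1
          exact Fintype.prod_equiv (Equiv.addRight 1) _ _ (fun i => rfl)
      _ = ∏ i, (starRingEnd ℂ (V i)) * V i := Finset.prod_mul_distrib.symm
      _ = ∏ i, (Complex.normSq (V i) : ℂ) := by
          refine Finset.prod_congr rfl fun i _ => ?_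
          rw [mul_comm, Complex.mul_conj]
  have hPpos : (0 : ℝ) < ∏ i, Complex.normSq (V i) :=
    Finset.prod_pos fun i _ => Complex.normSq_pos.mpr (hV i)
  have key : Complex.exp ((↑(∑ i, Complex.arg (z i)) : ℂ) * Complex.I) = 1 := by
    push_cast
    rw [Finset.sum_mul, Complex.exp_sum]
    have h1 : ∀ i ∈ Finset.univ, Complex.exp ((Complex.arg (z i) : ℂ) * Complex.I)
        = z i / (‖z i‖ : ℂ) := by
      intro i _
      rw [eq_div_iff (by exact_mod_cast norm_ne_zero_iff.mpr (hzne i)), mul_comm]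
      exact_mod_cast Complex.norm_mul_exp_arg_mul_I (z i)
    rw [Finset.prod_congr rfl h1, Finset.prod_div_distrib]
    have habs : (∏ i, ((‖z i‖ : ℝ) : ℂ))
        = ((∏ i, Complex.normSq (V i) : ℝ) : ℂ) := by
      rw [← Complex.ofReal_prod]
      congr 1
      have := congrArg norm hprod
      rw [norm_prod, Complex.norm_real, Real.norm_eq_abs, abs_of_pos hPpos] at this
      exact this
    rw [hprod, habs, div_self]
    exact_mod_cast hPpos.ne'
  rw [Complex.exp_eq_one_iff] at key
  obtain ⟨n, hn⟩ := key
  refine ⟨n, ?_⟩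
  have : ((∑ i, Complex.arg (z i) : ℝ) : ℂ) = (n : ℂ) * (2 * Real.pi) := by
    have hI : (Complex.I : ℂ) ≠ 0 := Complex.I_ne_zero
    field_simp at hn ⊢
    have := hn
    exact this
  exact_mod_cast this
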